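/- Let p be an odd prime and let r, d ∈ ℤ/pℤ with d ≠ 0. Then the number of matrices g ∈ GL₂(ℤ/pℤ) with tr(g) = r and det(g) = d equals p · ( p + ((r² − 4d)/p) ). -/

import Mathlib

open Matrix Finset


-- card of pairs with product t, t ≠ 0
lemma aux_card_pairs_ne {p : ℕ} [Fact p.Prime] (t : ZMod p) (ht : t ≠ 0) :
    Fintype.card {bc : ZMod p × ZMod p // bc.1 * bc.2 = t} = p - 1 := by
  have e : {bc : ZMod p × ZMod p // bc.1 * bc.2 = t} ≃ (ZMod p)ˣ :=
    { toFun := fun x => Units.mk0 x.1.1 (by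
        intro h; apply ht; rw [← x.2, h, zero_mul])
      invFun := fun u => ⟨(u.val, u.inv * t), by
        rw [← mul_assoc, u.val_inv, one_mul]⟩
      left_inv := by
        rintro ⟨⟨b, c⟩, h⟩
        ext
        · rfl
        · show (Units.mk0 b _).inv * t = c
          have hb : b ≠ 0 := by intro hb; apply ht; rw [← h, hb, zero_mul]
          show b⁻¹ * t = c
          field_simp [← h]
          exact h.symm
      right_inv := fun u => Units.ext rfl }
  rw [Fintype.card_congr e, ZMod.card_units]

lemma aux_card_pairs_zero {p : ℕ} [Fact p.Prime] :
    Fintype.card {bc : ZMod p × ZMod p // bc.1 * bc.2 = 0} = 2 * p - 1 := by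
  have hne : Fintype.card {bc : ZMod p × ZMod p // ¬ bc.1 * bc.2 = 0} = (p - 1) * (p - 1) := by
    have e : {bc : ZMod p × ZMod p // ¬ bc.1 * bc.2 = 0} ≃
        {b : ZMod p // b ≠ 0} × {c : ZMod p // c ≠ 0} := by
      refine (Equiv.subtypeEquivRight ?_).trans (Equiv.subtypeProdEquivProd)
      intro x
      exact mul_ne_zero_iff
    rw [Fintype.card_congr e, Fintype.card_prod]
    have : Fintype.card {b : ZMod p // b ≠ 0} = p - 1 := by
      rw [Fintype.card_subtype_compl, ZMod.card, Fintype.card_subtype_eq]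
    rw [this]
  have h2 := Fintype.card_subtype_compl (fun bc : ZMod p × ZMod p => bc.1 * bc.2 = 0)
  rw [hne] at h2
  have hcard : Fintype.card (ZMod p × ZMod p) = p * p := by
    rw [Fintype.card_prod, ZMod.card]
  rw [hcard] at h2
  have hp1 : 1 ≤ p := (Fact.out : p.Prime).one_lt.le
  have hle : Fintype.card {bc : ZMod p × ZMod p // bc.1 * bc.2 = 0} ≤ p * p := by
    rw [← hcard]; exact Fintype.card_subtype_le _
  obtain ⟨q, rfl⟩ : ∃ q, p = q + 1 := ⟨p - 1, (Nat.succ_pred_eq_of_pos hp1).symm⟩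
  simp only [Nat.add_sub_cancel] at h2
  have expand : (q + 1) * (q + 1) = q * q + 2 * q + 1 := by ring
  rw [expand] at h2 hle
  omega

lemma aux_card_roots {p : ℕ} [Fact p.Prime] (hp : p ≠ 2) (r d : ZMod p) :
    (Fintype.card {a : ZMod p // a * (r - a) - d = 0} : ℤ)
      = legendreSym p ((r ^ 2 - 4 * d).val : ℤ) + 1 := by
  have h2 : (2 : ZMod p) ≠ 0 := by
    rw [← Nat.cast_ofNat, Ne, ZMod.natCast_eq_zero_iff]
    exact fun h => hp ((Nat.prime_dvd_prime_iff_eq Fact.out Nat.prime_two).mp h)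
  have h4 : (-4 : ZMod p) ≠ 0 := by
    have : (4 : ZMod p) = 2 * 2 := by norm_num
    simp only [neg_ne_zero, this]
    exact mul_ne_zero h2 h2
  have e : {a : ZMod p // a * (r - a) - d = 0} ≃ {x : ZMod p // x ^ 2 = r ^ 2 - 4 * d} := by
    refine Equiv.subtypeEquiv ((Equiv.mulLeft₀ 2 h2).trans (Equiv.subRight r)) ?_
    intro a
    show a * (r - a) - d = 0 ↔ (2 * a - r) ^ 2 = r ^ 2 - 4 * d
    rw [← sub_eq_zero (a := (2 * a - r) ^ 2)]
    have key : (2 * a - r) ^ 2 - (r ^ 2 - 4 * d) = (-4) * (a * (r - a) - d) := by ring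
    rw [key, mul_eq_zero]
    simp [h4]
  rw [Fintype.card_congr e]
  have hs : (((r ^ 2 - 4 * d).val : ℤ) : ZMod p) = r ^ 2 - 4 * d := by
    push_cast
    simp [ZMod.natCast_val, ZMod.cast_id]
  have := legendreSym.card_sqrts (p := p) hp ((r ^ 2 - 4 * d).val : ℤ)
  rw [hs] at this
  rw [← this]
  congr 1
  rw [Set.toFinset_card]
  rfl

/-- For an odd prime `p` and `r, d ∈ ℤ/pℤ` with `d ≠ 0`, the number of
`g ∈ GL₂(ℤ/pℤ)` with `tr g = r` and `det g = d` equals `p(p + ((r²-4d)/p))`,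
where `(·/p)` is the Legendre symbol applied to an integer lift. -/
theorem card_GL2_fixed_trace_det (p : ℕ) [Fact p.Prime] (hp : p ≠ 2)
    (r d : ZMod p) (hd : d ≠ 0) :
    (Nat.card {g : GL (Fin 2) (ZMod p) |
        Matrix.trace (g : Matrix (Fin 2) (Fin 2) (ZMod p)) = r ∧
        Matrix.det (g : Matrix (Fin 2) (Fin 2) (ZMod p)) = d} : ℤ)
      = p * (p + legendreSym p ((r ^ 2 - 4 * d).val : ℤ)) := by
  classical
  have hp1 : 1 ≤ p := (Fact.out : p.Prime).one_lt.le
  -- Step 1 : drop the GL structure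
  have E1 : {g : GL (Fin 2) (ZMod p) |
        Matrix.trace (g : Matrix (Fin 2) (Fin 2) (ZMod p)) = r ∧
        Matrix.det (g : Matrix (Fin 2) (Fin 2) (ZMod p)) = d} ≃
      {M : Matrix (Fin 2) (Fin 2) (ZMod p) // M.trace = r ∧ M.det = d} :=
    { toFun := fun g => ⟨(g.1 : Matrix (Fin 2) (Fin 2) (ZMod p)), g.2⟩
      invFun := fun M =>
        ⟨((Matrix.isUnit_iff_isUnit_det M.1).mpr
            (isUnit_iff_ne_zero.mpr (by rw [M.2.2]; exact hd))).unit, by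
          constructor <;>
            simp only [IsUnit.unit_spec] <;> [exact M.2.1; exact M.2.2]⟩
      left_inv := fun g => by
        apply Subtype.ext
        apply Units.ext
        simp [IsUnit.unit_spec]
      right_inv := fun M => by
        apply Subtype.ext
        simp [IsUnit.unit_spec] }
  -- Step 2 : matrices to triples
  have E2 : {M : Matrix (Fin 2) (Fin 2) (ZMod p) // M.trace = r ∧ M.det = d} ≃
      {x : ZMod p × ZMod p × ZMod p //
        x.2.1 * x.2.2 = x.1 * (r - x.1) - d} :=
    { toFun := fun M => ⟨(M.1 0 0, M.1 0 1, M.1 1 0), by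
        obtain ⟨M, ht, hdet⟩ := M
        rw [Matrix.trace_fin_two] at ht
        rw [Matrix.det_fin_two] at hdet
        simp only
        linear_combination M 0 0 * ht - hdet⟩
      invFun := fun x => ⟨!![x.1.1, x.1.2.1; x.1.2.2, r - x.1.1], by
        obtain ⟨⟨a, b, c⟩, h⟩ := x
        constructor
        · rw [Matrix.trace_fin_two_of]
          ring
        · rw [Matrix.det_fin_two_of]
          linear_combination -h⟩
      left_inv := fun M => by
        apply Subtype.ext
        obtain ⟨M, ht, hdet⟩ := M
        rw [Matrix.trace_fin_two] at ht
        have h11 : M 1 1 = r - M 0 0 := by linear_combination ht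
        simp only
        conv_rhs => rw [Matrix.eta_fin_two M]
        rw [h11]
      right_inv := fun x => by
        apply Subtype.ext
        obtain ⟨⟨a, b, c⟩, h⟩ := x
        simp }
  -- Step 3 : triples to a sigma type
  have E3 : {x : ZMod p × ZMod p × ZMod p //
        x.2.1 * x.2.2 = x.1 * (r - x.1) - d} ≃
      Σ a : ZMod p, {bc : ZMod p × ZMod p // bc.1 * bc.2 = a * (r - a) - d} :=
    Equiv.subtypeProdEquivSigmaSubtype
      (fun a (bc : ZMod p × ZMod p) => bc.1 * bc.2 = a * (r - a) - d)
  have hcardsum : Nat.card {g : GL (Fin 2) (ZMod p) |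
        Matrix.trace (g : Matrix (Fin 2) (Fin 2) (ZMod p)) = r ∧
        Matrix.det (g : Matrix (Fin 2) (Fin 2) (ZMod p)) = d}
      = ∑ a : ZMod p, Fintype.card
          {bc : ZMod p × ZMod p // bc.1 * bc.2 = a * (r - a) - d} := by
    rw [Nat.card_eq_fintype_card, Fintype.card_congr ((E1.trans E2).trans E3),
      Fintype.card_sigma]
  rw [hcardsum]
  -- compute the inner cardinalities
  have hinner : ∀ a : ZMod p,
      ((Fintype.card {bc : ZMod p × ZMod p // bc.1 * bc.2 = a * (r - a) - d} : ℕ) : ℤ)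
        = ((p : ℤ) - 1) + if a * (r - a) - d = 0 then (p : ℤ) else 0 := by
    intro a
    by_cases h : a * (r - a) - d = 0
    · rw [if_pos h, h, aux_card_pairs_zero]
      push_cast [Nat.cast_sub (by omega : 1 ≤ 2 * p)]
      ring
    · rw [aux_card_pairs_ne _ h, if_neg h]
      push_cast [Nat.cast_sub hp1]
      ring
  push_cast
  rw [Finset.sum_congr rfl (fun a _ => hinner a), Finset.sum_add_distrib,
    Finset.sum_const]
  have hsum : (∑ x : ZMod p, if x * (r - x) - d = 0 then (p : ℤ) else 0)
      = (Fintype.card {a : ZMod p // a * (r - a) - d = 0} : ℤ) * p := by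
    rw [Finset.sum_ite, Finset.sum_const, Finset.sum_const_zero, add_zero,
      Fintype.card_subtype, nsmul_eq_mul]
  rw [hsum, aux_card_roots hp r d, Finset.card_univ, ZMod.card, nsmul_eq_mul]
  ring
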